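/- Let p > 1, F > 0 and D₀ > 0, and let (D_j) be a sequence of positive reals satisfying D_{j+1} ≥ F D_j^p / p^{2(j+1)} for all j ≥ 0. Then there exists a real constant q, depending only on p and F, such that D_j ≥ exp(p^j (log D₀ + q)) for all j ≥ 0. -/

import Mathlib

open MeasureTheory Metric Real Set

noncomputable section

/-- Euclidean 3-space. -/
abbrev E3 : Type := EuclideanSpace ℝ (Fin 3)

/-- surface measure on the unit sphere of `ℝ³` -/
def sphMeasure : Measure (sphere (0 : E3) 1) := (volume : Measure E3).toSphere

/-- surface integral over the unit sphere -/
def sphInt (h : E3 → ℝ) : ℝ := ∫ ξ : sphere (0 : E3) 1, h (ξ : E3) ∂sphMeasure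

/-- The Duhamel-type integral operator `L`. -/
def Lop (p : ℝ) (w : E3 → ℝ → ℝ) (x : E3) (t : ℝ) : ℝ :=
  (1 / (4 * π)) * ∫ s in (0:ℝ)..t,
    (t - s) * (1 + s) ^ (-(p - 1)) * sphInt (fun η => w (x + (t - s) • η) s)

/-- Kirchhoff's solution of the free wave equation with data `(ε f, ε (f + g))`. -/
def kirch (ε : ℝ) (f g : E3 → ℝ) (x : E3) (t : ℝ) : ℝ :=
  ε * (t / (4 * π)) * sphInt (fun ξ => f (x + t • ξ) + g (x + t • ξ)) +
    ε * deriv (fun τ : ℝ => (τ / (4 * π)) * sphInt (fun ξ => f (x + τ • ξ))) t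

/-- `γ(p,5) = 2 + 6p - 4p²` -/
def gam5 (p : ℝ) : ℝ := 2 + 6 * p - 4 * p ^ 2

/-- Strauss exponent `p_S(5)` -/
def pS5 : ℝ := (3 + Real.sqrt 17) / 4

/-- the exponent `q` -/
def qexp (p : ℝ) : ℝ := max (2 * (p - 1)) 1

/-- the exponent `q̄` -/
def qbar (p : ℝ) : ℝ := max 0 (2 * p - 3)

/-- the weight `w(r,t)` -/
def wgt (p ρ r t : ℝ) : ℝ :=
  if p = 3 / 2 then
    ρ⁻¹ * (t + r + 2 * ρ) * (Real.log (2 * (t + r + 2 * ρ) / (t - r + 2 * ρ)))⁻¹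
  else
    ρ ^ (-(2 * (p - 1))) * (t + r + 2 * ρ) ^ qexp p * (t - r + 2 * ρ) ^ qbar p

/-- the weighted `L^∞` norm on `ℝ³ × [0,T)` -/
def wnorm (p ρ T : ℝ) (u : E3 → ℝ → ℝ) : ℝ :=
  sSup {y : ℝ | ∃ x : E3, ∃ t : ℝ, 0 ≤ t ∧ t < T ∧ y = wgt p ρ ‖x‖ t * |u x t|}

/-- the norm `‖u⁰‖₀` -/
def wnorm0 (ρ : ℝ) (u : E3 → ℝ → ℝ) : ℝ :=
  sSup {y : ℝ | ∃ x : E3, ∃ t : ℝ, 0 ≤ t ∧ y = ρ⁻¹ * (t + ‖x‖ + 2 * ρ) * |u x t|}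

/-- the quantity `D(T)` -/
def DT (p ρ T : ℝ) : ℝ :=
  if p < pS5 then ((2 * T + 3 * ρ) / ρ) ^ (gam5 p / 2)
  else if p = pS5 then Real.log ((T + 2 * ρ) / ρ)
  else 1

/-- spherical mean of a function on `ℝ³ × [0,T)` -/
def sphMean (v : E3 → ℝ → ℝ) (r t : ℝ) : ℝ :=
  (1 / (4 * π)) * sphInt (fun ξ => v (r • ξ) t)

/-- the region `R(r,t)` -/
def Rset (r t : ℝ) : Set (ℝ × ℝ) :=
  {q | t - r ≤ q.2 + q.1 ∧ q.2 + q.1 ≤ t + r ∧ q.2 - q.1 ≤ t - r ∧ 0 ≤ q.2}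

/-- `m(p)` -/
def mexp (p : ℝ) : ℕ := if p < 2 then 1 else 2

end

/-- sequences satisfying `D_{j+1} ≥ F D_j^p / p^{2(j+1)}` obey the
doubly exponential lower bound `D_j ≥ exp(p^j (log D₀ + q))` for a constant `q`
depending only on `p` and `F`. -/
theorem iteration_sequence_lower_bound (p F : ℝ) (hp : 1 < p) (hF : 0 < F) :
    ∃ q : ℝ, ∀ D : ℕ → ℝ, (∀ j, 0 < D j) →
      (∀ j : ℕ, F * D j ^ p / p ^ (2 * ((j : ℝ) + 1)) ≤ D (j + 1)) →
      ∀ j : ℕ, Real.exp (p ^ (j : ℝ) * (Real.log (D 0) + q)) ≤ D j := by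
  have hp0 : (0:ℝ) < p := lt_trans one_pos hp
  have hpm : (0:ℝ) < p - 1 := by linarith
  have hlp : 0 < Real.log p := Real.log_pos hp
  set a : ℝ := 2 * Real.log p / (p - 1) with ha
  set b : ℝ := max 0 ((2 * Real.log p + a - Real.log F) / (p - 1)) with hb
  have ha0 : 0 ≤ a := by positivity
  have haeq : a * (p - 1) = 2 * Real.log p := by
    rw [ha]; exact div_mul_cancel₀ _ hpm.ne'
  have hb0 : 0 ≤ b := le_max_left _ _
  have hb1 : 2 * Real.log p + a - Real.log F ≤ b * (p - 1) := by
    have := le_max_right 0 ((2 * Real.log p + a - Real.log F) / (p - 1))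
    rw [div_le_iff₀ hpm] at this
    linarith [this]
  refine ⟨-b, fun D hD hrec => ?_⟩
  have key : ∀ j : ℕ, p ^ (j:ℝ) * (Real.log (D 0) + -b) + a * j + b ≤ Real.log (D j) := by
    intro j
    induction j with
    | zero => simp
    | succ j ih =>
      have hlog : Real.log F + p * Real.log (D j) - 2 * ((j:ℝ)+1) * Real.log p
          ≤ Real.log (D (j+1)) := by
        have h := hrec j
        have h1 : (0:ℝ) < F * D j ^ p / p ^ (2 * ((j : ℝ) + 1)) := by
          have := hD j; positivity
        have h2 := Real.log_le_log h1 h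
        rw [Real.log_div (by have := hD j; positivity) (by positivity),
            Real.log_mul (ne_of_gt hF) (by have := hD j; positivity),
            Real.log_rpow (hD j), Real.log_rpow hp0] at h2
        linarith
      have hstep : p * (p ^ (j:ℝ) * (Real.log (D 0) + -b) + a * j + b) ≤ p * Real.log (D j) :=
        mul_le_mul_of_nonneg_left ih (le_of_lt hp0)
      have hpow : p ^ (((j:ℕ)+1 : ℕ):ℝ) = p * p ^ (j:ℝ) := by
        push_cast
        rw [Real.rpow_add hp0, Real.rpow_one]
        ring
      rw [hpow]
      push_cast
      nlinarith [mul_nonneg (mul_nonneg ha0 (Nat.cast_nonneg j)) hpm.le,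
        mul_le_mul_of_nonneg_left hb1 (Nat.cast_nonneg j)]
  intro j
  have h1 : p ^ (j:ℝ) * (Real.log (D 0) + -b) ≤ Real.log (D j) := by
    have := key j
    nlinarith [mul_nonneg ha0 (Nat.cast_nonneg j)]
  calc Real.exp (p ^ (j:ℝ) * (Real.log (D 0) + -b)) ≤ Real.exp (Real.log (D j)) :=
        Real.exp_le_exp.mpr h1
    _ = D j := Real.exp_log (hD j)
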